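/- Let N ≥ 1, let ξ ∈ C⁴(ℝ^N) and let η ∈ C_c^∞(ℝ^N). Then ∫_{ℝ^N} (Δ²ξ) ξ η² dx = ∫_{ℝ^N} [Δ(ξη)]² dx + ∫_{ℝ^N} [−4(∇ξ · ∇η)² + 2 ξ (Δξ) |∇η|²] dx + ∫_{ℝ^N} ξ² [2 ∇(Δη) · ∇η + (Δη)²] dx. -/

import Mathlib

open MeasureTheory Real

/-- The Laplacian of a function on `ℝ^N` (sum of pure second derivatives). -/
noncomputable def lap {N : ℕ} (u : EuclideanSpace ℝ (Fin N) → ℝ)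
    (x : EuclideanSpace ℝ (Fin N)) : ℝ :=
  ∑ i : Fin N, fderiv ℝ (fun y => fderiv ℝ u y (EuclideanSpace.single i 1)) x
    (EuclideanSpace.single i 1)
/-- The dot product of the gradients of two functions on `ℝ^N`. -/
noncomputable def gradDot {N : ℕ} (f g : EuclideanSpace ℝ (Fin N) → ℝ)
    (x : EuclideanSpace ℝ (Fin N)) : ℝ :=
  ∑ i : Fin N, fderiv ℝ f x (EuclideanSpace.single i 1) *
    fderiv ℝ g x (EuclideanSpace.single i 1)

namespace Aux
variable {N : ℕ}

noncomputable def pd (i : Fin N) (f : EuclideanSpace ℝ (Fin N) → ℝ)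
    (x : EuclideanSpace ℝ (Fin N)) : ℝ :=
  fderiv ℝ f x (EuclideanSpace.single i 1)

lemma lap_eq (u : EuclideanSpace ℝ (Fin N) → ℝ) (x) :
    lap u x = ∑ i, pd i (pd i u) x := rfl

lemma gradDot_eq (f g : EuclideanSpace ℝ (Fin N) → ℝ) (x) :
    gradDot f g x = ∑ i, pd i f x * pd i g x := rfl

lemma gradDot_comm (f g : EuclideanSpace ℝ (Fin N) → ℝ) (x) :
    gradDot f g x = gradDot g f x := by
  simp [gradDot_eq, mul_comm]

lemma contDiff_pd {n m : WithTop ℕ∞} {f : EuclideanSpace ℝ (Fin N) → ℝ}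
    (hf : ContDiff ℝ n f) (h : m + 1 ≤ n) (i : Fin N) : ContDiff ℝ m (pd i f) :=
  (hf.fderiv_right h).clm_apply contDiff_const

lemma contDiff_lap {n m : WithTop ℕ∞} {f : EuclideanSpace ℝ (Fin N) → ℝ}
    (hf : ContDiff ℝ n f) (h : m + 2 ≤ n) : ContDiff ℝ m (lap f) := by
  have h1 : m + 1 + 1 ≤ n := by rwa [add_assoc, one_add_one_eq_two]
  exact ContDiff.sum fun i _ => contDiff_pd (contDiff_pd hf h1 i) le_rfl i

lemma pd_add {f g : EuclideanSpace ℝ (Fin N) → ℝ} (i : Fin N) {x}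
    (hf : DifferentiableAt ℝ f x) (hg : DifferentiableAt ℝ g x) :
    pd i (fun y => f y + g y) x = pd i f x + pd i g x := by
  simp [pd, fderiv_fun_add hf hg]

lemma pd_sub {f g : EuclideanSpace ℝ (Fin N) → ℝ} (i : Fin N) {x}
    (hf : DifferentiableAt ℝ f x) (hg : DifferentiableAt ℝ g x) :
    pd i (fun y => f y - g y) x = pd i f x - pd i g x := by
  simp [pd, fderiv_fun_sub hf hg]

lemma pd_mul {f g : EuclideanSpace ℝ (Fin N) → ℝ} (i : Fin N) {x}
    (hf : DifferentiableAt ℝ f x) (hg : DifferentiableAt ℝ g x) :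
    pd i (fun y => f y * g y) x = f x * pd i g x + pd i f x * g x := by
  simp [pd, fderiv_fun_mul hf hg]; ring

lemma pd_const_mul {f : EuclideanSpace ℝ (Fin N) → ℝ} (i : Fin N) {x} (c : ℝ)
    (hf : DifferentiableAt ℝ f x) :
    pd i (fun y => c * f y) x = c * pd i f x := by
  simp [pd, fderiv_const_mul hf c]

lemma pd_hasCompactSupport {f : EuclideanSpace ℝ (Fin N) → ℝ}
    (hf : HasCompactSupport f) (i : Fin N) : HasCompactSupport (pd i f) :=
  hf.fderiv_apply ℝ _

lemma hcs_finsetSum {ι : Type*} {s : Finset ι} {F : ι → EuclideanSpace ℝ (Fin N) → ℝ}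
    (h : ∀ i ∈ s, HasCompactSupport (F i)) :
    HasCompactSupport (fun x => ∑ i ∈ s, F i x) := by
  classical
  induction s using Finset.induction with
  | empty => simp only [Finset.sum_empty]; exact HasCompactSupport.zero
  | insert a s' hnot ih =>
    simp only [Finset.sum_insert hnot]
    exact (h a (Finset.mem_insert_self a s')).add
      (ih fun i hi => h i (Finset.mem_insert_of_mem hi))

lemma hcs_lap {f : EuclideanSpace ℝ (Fin N) → ℝ} (hf : HasCompactSupport f) :
    HasCompactSupport (lap f) := by
  have : lap f = fun x => ∑ i, pd i (pd i f) x := rfl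
  rw [this]
  exact hcs_finsetSum fun i _ => pd_hasCompactSupport (pd_hasCompactSupport hf i) i

lemma hcs_gradDot_right {f g : EuclideanSpace ℝ (Fin N) → ℝ} (hg : HasCompactSupport g) :
    HasCompactSupport (gradDot f g) := by
  have : gradDot f g = fun x => ∑ i, pd i f x * pd i g x := rfl
  rw [this]
  exact hcs_finsetSum fun i _ => (pd_hasCompactSupport hg i).mul_left

lemma integral_pd_eq_zero {f : EuclideanSpace ℝ (Fin N) → ℝ}
    (hf : ContDiff ℝ 1 f) (hsupp : HasCompactSupport f) (i : Fin N) :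
    ∫ x, pd i f x = 0 := by
  have h := integral_mul_fderiv_eq_neg_fderiv_mul_of_integrable
    (μ := (volume : Measure (EuclideanSpace ℝ (Fin N))))
    (f := fun _ : EuclideanSpace ℝ (Fin N) => (1:ℝ)) (g := f)
    (v := EuclideanSpace.single i 1) ?_ ?_ ?_ (fun x _ => differentiable_const (1:ℝ) x) (fun x _ => hf.differentiable one_ne_zero x)
  · simpa [pd] using h
  · simp
  · have := ((contDiff_pd (m := 0) hf (by norm_num) i).continuous.integrable_of_hasCompactSupport
      (pd_hasCompactSupport hsupp i) (μ := volume))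
    simp only [one_mul]
    exact this
  · simpa using hf.continuous.integrable_of_hasCompactSupport hsupp

/-- product rule for the Laplacian -/
lemma lap_mul {f g : EuclideanSpace ℝ (Fin N) → ℝ}
    (hf : ContDiff ℝ 2 f) (hg : ContDiff ℝ 2 g) (x) :
    lap (fun y => f y * g y) x
      = f x * lap g x + 2 * gradDot f g x + g x * lap f x := by
  have hf1 : Differentiable ℝ f := hf.differentiable (by norm_num)
  have hg1 : Differentiable ℝ g := hg.differentiable (by norm_num)
  have hfd : ∀ i : Fin N, Differentiable ℝ (pd i f) :=
    fun i => (contDiff_pd (m := 1) hf (by norm_num) i).differentiable one_ne_zero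
  have hgd : ∀ i : Fin N, Differentiable ℝ (pd i g) :=
    fun i => (contDiff_pd (m := 1) hg (by norm_num) i).differentiable one_ne_zero
  have key : ∀ i : Fin N, pd i (pd i (fun y => f y * g y)) x
      = f x * pd i (pd i g) x + 2 * (pd i f x * pd i g x) + g x * pd i (pd i f) x := by
    intro i
    have : pd i (fun y => f y * g y) = fun y => f y * pd i g y + pd i f y * g y :=
      funext fun y => pd_mul i (hf1 y) (hg1 y)
    rw [this, pd_add i ((hf1 x).fun_mul (hgd i x)) ((hfd i x).fun_mul (hg1 x)),
      pd_mul i (hf1 x) (hgd i x), pd_mul i (hfd i x) (hg1 x)]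
    ring
  rw [lap_eq, Finset.sum_congr rfl fun i _ => key i]
  simp only [Finset.sum_add_distrib, ← Finset.mul_sum, lap_eq, gradDot_eq]

lemma gradDot_mul_left {f g h : EuclideanSpace ℝ (Fin N) → ℝ}
    (hf : Differentiable ℝ f) (hg : Differentiable ℝ g) (x) :
    gradDot (fun y => f y * g y) h x
      = f x * gradDot g h x + g x * gradDot f h x := by
  simp only [gradDot_eq, Finset.mul_sum, ← Finset.sum_add_distrib]
  refine Finset.sum_congr rfl fun i _ => ?_
  rw [pd_mul i (hf x) (hg x)]; ring

lemma gradDot_const_mul {f h : EuclideanSpace ℝ (Fin N) → ℝ} (c : ℝ)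
    (hf : Differentiable ℝ f) (x) :
    gradDot (fun y => c * f y) h x = c * gradDot f h x := by
  simp only [gradDot_eq, Finset.mul_sum]
  refine Finset.sum_congr rfl fun i _ => ?_
  rw [pd_const_mul i c (hf x)]; ring

end Aux

namespace Aux
variable {N : ℕ}

/-- the vector field whose divergence gives the difference of the two sides -/
noncomputable def V (ξ η : EuclideanSpace ℝ (Fin N) → ℝ) (i : Fin N) :
    EuclideanSpace ℝ (Fin N) → ℝ := fun y =>
  ξ y * (η y * η y) * pd i (lap ξ) y
  - lap ξ y * pd i (fun z => ξ z * (η z * η z)) y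
  - 2 * (ξ y * ξ y) * lap η y * pd i η y

section Key
variable {ξ η : EuclideanSpace ℝ (Fin N) → ℝ}
  (hξ : ContDiff ℝ 4 ξ) (hη : ContDiff ℝ 4 η)

include hξ hη

lemma key (x) :
    lap (lap ξ) x * ξ x * η x ^ 2
      = ((lap (fun y => ξ y * η y) x) ^ 2
        + (-4 * (gradDot ξ η x) ^ 2 + 2 * ξ x * lap ξ x * gradDot η η x)
        + ξ x ^ 2 * (2 * gradDot (lap η) η x + (lap η x) ^ 2))
        + ∑ i, pd i (V ξ η i) x := by
  -- differentiability facts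
  have hξ2 : ContDiff ℝ 2 ξ := hξ.of_le (by norm_num)
  have hη2 : ContDiff ℝ 2 η := hη.of_le (by norm_num)
  have hξ1 : Differentiable ℝ ξ := hξ.differentiable (by norm_num)
  have hη1 : Differentiable ℝ η := hη.differentiable (by norm_num)
  have hηη : ContDiff ℝ 4 (fun y => η y * η y) := hη.mul hη
  have hξηη : ContDiff ℝ 4 (fun y => ξ y * (η y * η y)) := hξ.mul hηη
  have hξηη1 : Differentiable ℝ (fun y => ξ y * (η y * η y)) :=
    hξηη.differentiable (by norm_num)
  have hlapξ : ContDiff ℝ 2 (lap ξ) := contDiff_lap hξ (by norm_num)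
  have hlapη : ContDiff ℝ 2 (lap η) := contDiff_lap hη (by norm_num)
  have hlapξ1 : Differentiable ℝ (lap ξ) := hlapξ.differentiable (by norm_num)
  have hlapη1 : Differentiable ℝ (lap η) := hlapη.differentiable (by norm_num)
  have hpdlapξ : ∀ i : Fin N, Differentiable ℝ (pd i (lap ξ)) :=
    fun i => (contDiff_pd (m := 1) hlapξ (by norm_num) i).differentiable one_ne_zero
  have hpdξηη : ∀ i : Fin N, Differentiable ℝ (pd i (fun z => ξ z * (η z * η z))) :=
    fun i => (contDiff_pd (m := 3) hξηη (by norm_num) i).differentiable (by norm_num)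
  have hpdη : ∀ i : Fin N, Differentiable ℝ (pd i η) :=
    fun i => (contDiff_pd (m := 3) hη (by norm_num) i).differentiable (by norm_num)
  have hW3 : Differentiable ℝ (fun y => 2 * (ξ y * ξ y) * lap η y) :=
    (((hξ1.mul hξ1).const_mul 2).mul hlapη1)
  -- divergence computation
  have hdiv : ∑ i, pd i (V ξ η i) x
      = (ξ x * (η x * η x)) * lap (lap ξ) x
        + gradDot (fun y => ξ y * (η y * η y)) (lap ξ) x
        - (lap ξ x * lap (fun y => ξ y * (η y * η y)) x
           + gradDot (lap ξ) (fun y => ξ y * (η y * η y)) x)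
        - ((2 * (ξ x * ξ x) * lap η x) * lap η x
           + gradDot (fun y => 2 * (ξ y * ξ y) * lap η y) η x) := by
    have hterm : ∀ i : Fin N, pd i (V ξ η i) x
        = ((ξ x * (η x * η x)) * pd i (pd i (lap ξ)) x
            + pd i (fun y => ξ y * (η y * η y)) x * pd i (lap ξ) x)
          - (lap ξ x * pd i (pd i (fun z => ξ z * (η z * η z))) x
            + pd i (lap ξ) x * pd i (fun z => ξ z * (η z * η z)) x)
          - ((2 * (ξ x * ξ x) * lap η x) * pd i (pd i η) x
            + pd i (fun y => 2 * (ξ y * ξ y) * lap η y) x * pd i η x) := by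
      intro i
      have d1 : DifferentiableAt ℝ (fun y => ξ y * (η y * η y) * pd i (lap ξ) y) x :=
        ((hξηη1 x).mul (hpdlapξ i x))
      have d2 : DifferentiableAt ℝ
          (fun y => lap ξ y * pd i (fun z => ξ z * (η z * η z)) y) x :=
        ((hlapξ1 x).mul (hpdξηη i x))
      have d3 : DifferentiableAt ℝ
          (fun y => 2 * (ξ y * ξ y) * lap η y * pd i η y) x :=
        ((hW3 x).mul (hpdη i x))
      have e : V ξ η i = fun y =>
          (ξ y * (η y * η y) * pd i (lap ξ) y
            - lap ξ y * pd i (fun z => ξ z * (η z * η z)) y)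
          - 2 * (ξ y * ξ y) * lap η y * pd i η y := rfl
      rw [e, pd_sub i (d1.fun_sub d2) d3, pd_sub i d1 d2,
        pd_mul i (hξηη1 x) (hpdlapξ i x),
        pd_mul i (hlapξ1 x) (hpdξηη i x),
        pd_mul i (hW3 x) (hpdη i x)]
    rw [Finset.sum_congr rfl fun i _ => hterm i]
    simp only [Finset.sum_sub_distrib, Finset.sum_add_distrib, ← Finset.mul_sum,
      ← lap_eq, ← gradDot_eq]
  -- expansions
  have E1 : lap (fun y => ξ y * η y) x
      = ξ x * lap η x + 2 * gradDot ξ η x + η x * lap ξ x := lap_mul hξ2 hη2 x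
  have Eηη : lap (fun y => η y * η y) x
      = η x * lap η x + 2 * gradDot η η x + η x * lap η x := lap_mul hη2 hη2 x
  have E2 : lap (fun y => ξ y * (η y * η y)) x
      = ξ x * lap (fun y => η y * η y) x + 2 * gradDot ξ (fun y => η y * η y) x
        + (η x * η x) * lap ξ x := lap_mul hξ2 (hη2.mul hη2) x
  have E3 : gradDot ξ (fun y => η y * η y) x
      = η x * gradDot ξ η x + η x * gradDot ξ η x := by
    rw [gradDot_comm, gradDot_mul_left hη1 hη1, gradDot_comm η ξ]
  have E4 : gradDot (fun y => 2 * (ξ y * ξ y) * lap η y) η x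
      = 2 * ((ξ x * ξ x) * gradDot (lap η) η x
          + lap η x * (ξ x * gradDot ξ η x + ξ x * gradDot ξ η x)) := by
    have e : (fun y => 2 * (ξ y * ξ y) * lap η y)
        = fun y => 2 * ((ξ y * ξ y) * lap η y) := by funext y; ring
    rw [e, gradDot_const_mul 2 ((hξ1.fun_mul hξ1).fun_mul hlapη1),
      gradDot_mul_left (hξ1.fun_mul hξ1) hlapη1, gradDot_mul_left hξ1 hξ1]
  have E5 : gradDot (fun y => ξ y * (η y * η y)) (lap ξ) x
      = gradDot (lap ξ) (fun y => ξ y * (η y * η y)) x := gradDot_comm _ _ x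
  rw [hdiv, E5, E2, Eηη, E3, E4, E1]
  ring

end Key
end Aux

namespace Aux
variable {N : ℕ}

lemma hcs_sub {f g : EuclideanSpace ℝ (Fin N) → ℝ}
    (h1 : HasCompactSupport f) (h2 : HasCompactSupport g) :
    HasCompactSupport (fun x => f x - g x) := by
  have h2' : HasCompactSupport (fun x => -(g x)) :=
    h2.comp_left (g := Neg.neg) neg_zero
  simpa [sub_eq_add_neg, Pi.add_def] using h1.add h2'

lemma cont_gradDot {f g : EuclideanSpace ℝ (Fin N) → ℝ}
    (hf : ContDiff ℝ 1 f) (hg : ContDiff ℝ 1 g) :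
    Continuous (gradDot f g) := by
  have : gradDot f g = fun x => ∑ i, pd i f x * pd i g x := rfl
  rw [this]
  exact continuous_finset_sum _ fun i _ =>
    ((contDiff_pd (m := 0) hf (by norm_num) i).continuous.mul
      (contDiff_pd (m := 0) hg (by norm_num) i).continuous)

end Aux

open Aux

/-- The integral identity (2.4): for `ξ ∈ C⁴(ℝ^N)` and `η ∈ C_c^∞(ℝ^N)`,
`∫ (Δ²ξ) ξ η² = ∫ [Δ(ξη)]² + ∫ [−4(∇ξ·∇η)² + 2ξ(Δξ)|∇η|²] + ∫ ξ²[2∇(Δη)·∇η + (Δη)²]`. -/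
theorem integral_identity
    (N : ℕ) (hN : 1 ≤ N)
    (ξ η : EuclideanSpace ℝ (Fin N) → ℝ)
    (hξ : ContDiff ℝ 4 ξ) (hη : ContDiff ℝ (⊤ : ℕ∞) η)
    (hηsupp : HasCompactSupport η) :
    ∫ x, lap (lap ξ) x * ξ x * η x ^ 2
      = (∫ x, (lap (fun y => ξ y * η y) x) ^ 2)
        + (∫ x, (-4 * (gradDot ξ η x) ^ 2 + 2 * ξ x * lap ξ x * gradDot η η x))
        + ∫ x, ξ x ^ 2 * (2 * gradDot (lap η) η x + (lap η x) ^ 2) := by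
  have hη4 : ContDiff ℝ 4 η := hη.of_le (by simp [WithTop.le_coe_iff])
  have hξ1 : ContDiff ℝ 1 ξ := hξ.of_le (by norm_num)
  have hη1 : ContDiff ℝ 1 η := hη4.of_le (by norm_num)
  have hηη : ContDiff ℝ 4 (fun y => η y * η y) := hη4.mul hη4
  have hξηη : ContDiff ℝ 4 (fun y => ξ y * (η y * η y)) := hξ.mul hηη
  have hlapξ2 : ContDiff ℝ 2 (lap ξ) := contDiff_lap hξ (by norm_num)
  have hlapη2 : ContDiff ℝ 2 (lap η) := contDiff_lap hη4 (by norm_num)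
  have hlapξη : ContDiff ℝ 2 (lap (fun y => ξ y * η y)) :=
    contDiff_lap (hξ.mul hη4) (by norm_num)
  -- compact supports
  have hcsηη : HasCompactSupport (fun y => η y * η y) := hηsupp.mul_left
  have hcsξηη : HasCompactSupport (fun y => ξ y * (η y * η y)) := hcsηη.mul_left
  have hcsξη : HasCompactSupport (fun y => ξ y * η y) := hηsupp.mul_left
  -- integrability of the three right-hand integrands
  have i1 : Integrable (fun x => (lap (fun y => ξ y * η y) x) ^ 2) := by
    refine (hlapξη.continuous.pow 2).integrable_of_hasCompactSupport ?_
    have h := hcs_lap hcsξη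
    have h2 := h.comp_left (g := fun t : ℝ => t ^ 2) (by simp)
    exact h2
  have i2 : Integrable (fun x =>
      -4 * (gradDot ξ η x) ^ 2 + 2 * ξ x * lap ξ x * gradDot η η x) := by
    refine Continuous.integrable_of_hasCompactSupport ?_ ?_
    · exact (continuous_const.mul ((cont_gradDot hξ1 hη1).pow 2)).add
        (((continuous_const.mul hξ.continuous).mul hlapξ2.continuous).mul
          (cont_gradDot hη1 hη1))
    · exact HasCompactSupport.add
        ((hcs_gradDot_right hηsupp).comp_left (g := fun t : ℝ => -4 * t ^ 2) (by simp))
        ((hcs_gradDot_right hηsupp).mul_left)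
  have i3 : Integrable (fun x =>
      ξ x ^ 2 * (2 * gradDot (lap η) η x + (lap η x) ^ 2)) := by
    refine Continuous.integrable_of_hasCompactSupport ?_ ?_
    · exact (hξ.continuous.pow 2).mul
        ((continuous_const.mul (cont_gradDot (hlapη2.of_le (by norm_num)) hη1)).add
          (hlapη2.continuous.pow 2))
    · exact HasCompactSupport.mul_left
        (HasCompactSupport.add ((hcs_gradDot_right hηsupp).mul_left)
          ((hcs_lap hηsupp).comp_left (g := fun t : ℝ => t ^ 2) (by simp)))
  -- the vector field is C¹ with compact support
  have hV1 : ∀ i : Fin N, ContDiff ℝ 1 (V ξ η i) := by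
    intro i
    refine ContDiff.sub (ContDiff.sub ?_ ?_) ?_
    · exact (hξηη.of_le (by norm_num)).mul (contDiff_pd (m := 1) hlapξ2 (by norm_num) i)
    · exact (hlapξ2.of_le (by norm_num)).mul (contDiff_pd (m := 1) hξηη (by norm_num) i)
    · exact (((contDiff_const.mul (hξ1.mul hξ1)).mul (hlapη2.of_le (by norm_num))).mul
        (contDiff_pd (m := 1) hη4 (by norm_num) i))
  have hVcs : ∀ i : Fin N, HasCompactSupport (V ξ η i) := by
    intro i
    refine hcs_sub (hcs_sub ?_ ?_) ?_
    · exact hcsξηη.mul_right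
    · exact (pd_hasCompactSupport hcsξηη i).mul_left
    · exact (pd_hasCompactSupport hηsupp i).mul_left
  have iVi : ∀ i : Fin N, Integrable (fun x => pd i (V ξ η i) x) := fun i =>
    (contDiff_pd (m := 0) (hV1 i) (by norm_num) i).continuous.integrable_of_hasCompactSupport
      (pd_hasCompactSupport (hVcs i) i)
  have iD : Integrable (fun x => ∑ i, pd i (V ξ η i) x) :=
    integrable_finset_sum _ fun i _ => iVi i
  have i12 : Integrable (fun x => (lap (fun y => ξ y * η y) x) ^ 2
      + (-4 * (gradDot ξ η x) ^ 2 + 2 * ξ x * lap ξ x * gradDot η η x)) := i1.add i2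
  have i123 : Integrable (fun x => (lap (fun y => ξ y * η y) x) ^ 2
      + (-4 * (gradDot ξ η x) ^ 2 + 2 * ξ x * lap ξ x * gradDot η η x)
      + ξ x ^ 2 * (2 * gradDot (lap η) η x + (lap η x) ^ 2)) := i12.add i3
  have hD0 : ∫ x, ∑ i, pd i (V ξ η i) x = 0 := by
    rw [integral_finset_sum _ fun i _ => iVi i]
    exact Finset.sum_eq_zero fun i _ => integral_pd_eq_zero (hV1 i) (hVcs i) i
  simp only [key hξ hη4]
  rw [integral_add i123 iD, integral_add i12 i3, integral_add i1 i2, hD0, add_zero]
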